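/- For A = J1 (an element of sp(1)), the Ricci tensor Ric_A(y,z) := Tr{x ↦ R_A(x,y)z} of the curvature operator R_A equals 4nκ ω(J1 y, z) = -4nκ g_1(y,z). -/
import Mathlib


/-- The curvature operator R_A(·,y)z as an endomorphism in the first argument x
(see Corollary `curvatureRQom` of the paper); gₐ(u,w) = ω(u, Jₐ w). -/
noncomputable def curvOp {V : Type*} [AddCommGroup V] [Module ℝ V]
    (ω : LinearMap.BilinForm ℝ V) (J : Fin 3 → Module.End ℝ V)
    (A : Module.End ℝ V) (κ : ℝ) (y z : V) : Module.End ℝ V :=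
  κ • ((ω.flip y).smulRight (A z))
  + (κ / 2) • ((ω.flip z).smulRight (A y)
      - ∑ a : Fin 3, (ω.flip (J a z)).smulRight (J a (A y))
      + ω (A y) z • (LinearMap.id : Module.End ℝ V)
      - ∑ a : Fin 3, ω (A y) (J a z) • J a)
  - (κ / 2) • (ω y z • A
      - ∑ a : Fin 3, ω y (J a z) • (J a * A)
      + ((ω.flip z) ∘ₗ (A : V →ₗ[ℝ] V)).smulRight y
      - ∑ a : Fin 3, ((ω.flip (J a z)) ∘ₗ (A : V →ₗ[ℝ] V)).smulRight (J a y))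
  - (κ / 2) • (∑ a : Fin 3,
      ((ω.flip (J a (A y))) - (ω y) ∘ₗ ((J a * A : Module.End ℝ V) : V →ₗ[ℝ] V)).smulRight
        (J a z))

lemma trace_smulRight' {V : Type*} [AddCommGroup V] [Module ℝ V] [FiniteDimensional ℝ V]
    (f : V →ₗ[ℝ] ℝ) (v : V) :
    LinearMap.trace ℝ V (f.smulRight v) = f v := by
  have h : f.smulRight v = dualTensorHom ℝ V V (f ⊗ₜ v) := by
    ext x; simp [dualTensorHom_apply]
  rw [h, LinearMap.trace_eq_contract_apply, contractLeft_apply]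

/- STATEMENT 9: For A = J₁ ∈ sp(1), the Ricci tensor Ric_A(y,z) = Tr{x ↦ R_A(x,y)z}
equals 4n κ ω(J₁ y, z) = -4n κ g₁(y,z), where g₁(y,z) = ω(y, J₁ z). -/
theorem stmt9 (V : Type*) [AddCommGroup V] [Module ℝ V] [FiniteDimensional ℝ V]
    (n : ℕ) (hdim : Module.finrank ℝ V = 4 * n)
    (J : Fin 3 → Module.End ℝ V)
    (hJsq : ∀ a, J a * J a = -1)
    (hJJJ : J 0 * J 1 * J 2 = -1)
    (ω : LinearMap.BilinForm ℝ V)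
    (hskew : ∀ x y, ω x y = - ω y x)
    (hnd : ∀ x, (∀ y, ω x y = 0) → x = 0)
    (hherm : ∀ (a : Fin 3) x y, ω (J a x) (J a y) = ω x y)
    (κ : ℝ) (hκ : κ ≠ 0) :
    ∀ y z : V,
      LinearMap.trace ℝ V (curvOp ω J (J 0) κ y z) = 4 * (n : ℝ) * κ * ω (J 0 y) z ∧
      4 * (n : ℝ) * κ * ω (J 0 y) z = -(4 * (n : ℝ) * κ) * ω y (J 0 z) := by
  have hsq' : ∀ (i : Fin 3) (f : Module.End ℝ V), J i * (J i * f) = -f := fun i f => by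
    rw [← mul_assoc, hJsq i, neg_one_mul]
  have hab : J 0 * J 1 = J 2 := by
    have h := congrArg (· * (-J 2)) hJJJ
    simpa [mul_assoc, mul_neg, hJsq, neg_one_mul] using h
  have hc : J 0 * (J 1 * (J 0 * J 1)) = -1 := by
    rw [← mul_assoc, hab]; exact hJsq 2
  have h4 : J 1 * (J 0 * J 1) = J 0 := by
    have h := congrArg (J 0 * ·) hc
    simpa [hsq', mul_neg_one] using h
  have hba : J 1 * J 0 = -J 2 := by
    have h : (J 1 * (J 0 * J 1)) * J 1 = J 0 * J 1 := by rw [h4]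
    rw [mul_assoc, mul_assoc, hJsq 1, mul_neg_one, mul_neg, hab] at h
    exact neg_eq_iff_eq_neg.mp h
  have hca : J 2 * J 0 = J 1 := by
    have h : J 2 = -(J 1 * J 0) := by rw [hba, neg_neg]
    rw [h, neg_mul, mul_assoc, hJsq 0, mul_neg_one, neg_neg]
  have hac : J 0 * J 2 = -J 1 := by rw [← hab, hsq']
  have hbc : J 1 * J 2 = J 0 := by rw [← hab]; exact h4
  have hcb : J 2 * J 1 = -J 0 := by
    rw [← hab, mul_assoc, hJsq 1, mul_neg_one]
  have tJ2 : LinearMap.trace ℝ V (J 2) = 0 := by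
    have h := LinearMap.trace_mul_comm ℝ (J 0) (J 1)
    rw [hab, hba, map_neg] at h; linarith
  have tJ0 : LinearMap.trace ℝ V (J 0) = 0 := by
    have h := LinearMap.trace_mul_comm ℝ (J 1) (J 2)
    rw [hbc, hcb, map_neg] at h; linarith
  have tJ1 : LinearMap.trace ℝ V (J 1) = 0 := by
    have h := LinearMap.trace_mul_comm ℝ (J 2) (J 0)
    rw [hca, hac, map_neg] at h; linarith
  -- pointwise versions
  have p00 : ∀ v, J 0 (J 0 v) = -v := fun v => by
    have := DFunLike.congr_fun (hJsq 0) v; simpa using this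
  have pab : ∀ v, J 0 (J 1 v) = J 2 v := fun v => by
    have := DFunLike.congr_fun hab v; simpa using this
  have pba : ∀ v, J 1 (J 0 v) = -(J 2 v) := fun v => by
    have := DFunLike.congr_fun hba v; simpa using this
  have pca : ∀ v, J 2 (J 0 v) = J 1 v := fun v => by
    have := DFunLike.congr_fun hca v; simpa using this
  have pac : ∀ v, J 0 (J 2 v) = -(J 1 v) := fun v => by
    have := DFunLike.congr_fun hac v; simpa using this
  have hω0 : ∀ u v, ω u (J 0 v) = - ω (J 0 u) v := fun u v => by
    have h := hherm 0 (J 0 u) v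
    rw [p00] at h
    simp only [map_neg, LinearMap.neg_apply] at h
    linarith
  have pbc : ∀ v, J 1 (J 2 v) = J 0 v := fun v => by
    have := DFunLike.congr_fun hbc v; simpa using this
  have pcb : ∀ v, J 2 (J 1 v) = -(J 0 v) := fun v => by
    have := DFunLike.congr_fun hcb v; simpa using this
  intro y z
  have hf : ∀ u v : V, ω.flip u v = ω v u := fun u v => rfl
  have g1 : ∀ u v : V, ω (J 2 u) (J 1 v) = -(ω (J 0 u) v) := fun u v => by
    have h : J 2 u = -(J 1 (J 0 u)) := by rw [pba, neg_neg]
    rw [h]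
    simp only [map_neg, LinearMap.neg_apply, hherm 1]
  have g2 : ∀ u v : V, ω (J 1 u) (J 2 v) = ω (J 0 u) v := fun u v => by
    have h : J 1 u = J 2 (J 0 u) := (pca u).symm
    rw [h, hherm 2]
  have f3 : ω (J 0 z) y = ω (J 0 y) z := by
    rw [hskew, hω0 y z, neg_neg]
  constructor
  · rw [curvOp]
    simp only [map_add, map_sub, map_smul, map_sum, Fin.sum_univ_three, trace_smulRight',
      LinearMap.trace_id, LinearMap.flip_apply, LinearMap.comp_apply, LinearMap.sub_apply,
      LinearMap.coe_comp, Function.comp_apply, Module.End.mul_apply,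
      smul_eq_mul, hJsq, hba, hca, map_neg, tJ0, tJ1, tJ2,
      LinearMap.trace_one, hdim]
    simp only [LinearMap.flip_apply, p00, pab, pba, pca, pac, pbc, pcb, LinearMap.neg_apply,
      Module.End.one_apply, map_neg, hherm, hf, g1, g2, f3, hω0]
    push_cast
    ring
  · rw [hω0 y z]; ring
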